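/- For x → ∞ and a_n → 0 with x²a_n → 0, the Gaussian tail satisfies (1 - Φ(x(1 + a_n))) = (1 - Φ(x))·exp(-x²a_n)·(1 + O(x^{-2}) + O(x²a_n²)). In particular, for fixed x > 1 and |a| ≤ 1/(2x²), |(1-Φ(x(1+a)))/((1-Φ(x))·e^{-x²a}) - 1| ≤ C(x^{-2} + x²a²) for an absolute constant C. -/

import Mathlib

set_option maxHeartbeats 1000000

open MeasureTheory Real

noncomputable def stdNormalPDF (x : ℝ) : ℝ := (Real.sqrt (2 * Real.pi))⁻¹ * Real.exp (-x ^ 2 / 2)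

noncomputable def stdNormalCDF (x : ℝ) : ℝ := ∫ u in Set.Iic x, stdNormalPDF u

section Aux
open Filter

lemma gauss_integrable : Integrable (fun u : ℝ => Real.exp (-u ^ 2 / 2)) := by
  have := integrable_exp_neg_mul_sq (b := 1/2) (by norm_num)
  convert this using 2 with u
  ring_nf

lemma gauss_total : ∫ u : ℝ, Real.exp (-u ^ 2 / 2) = Real.sqrt (2 * Real.pi) := by
  have := integral_gaussian (1/2)
  rw [show Real.sqrt (Real.pi / (1/2)) = Real.sqrt (2 * Real.pi) by norm_num [mul_comm]] at this
  rw [← this]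
  congr 1 with u
  ring_nf

lemma gauss_tendsto_zero : Tendsto (fun u : ℝ => Real.exp (-u ^ 2 / 2)) atTop (nhds 0) := by
  apply Real.tendsto_exp_atBot.comp
  have h : Tendsto (fun u : ℝ => u ^ 2 / 2) atTop atTop :=
    (tendsto_pow_atTop (two_ne_zero)).atTop_div_const (by norm_num)
  simpa [Function.comp_def, neg_div] using tendsto_neg_atTop_atBot.comp h

lemma deriv_gauss (u : ℝ) : HasDerivAt (fun u : ℝ => Real.exp (-u ^ 2 / 2))
    (Real.exp (-u ^ 2 / 2) * (-u)) u := by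
  have h1 : HasDerivAt (fun u : ℝ => -u ^ 2 / 2) (-u) u := by
    have h := ((hasDerivAt_pow 2 u).neg).div_const 2
    norm_num at h
    rwa [show -(2 * u) / 2 = -u by ring] at h
  exact h1.exp

lemma mills_upper {x : ℝ} (hx : 0 < x) :
    (∫ u in Set.Ioi x, Real.exp (-u ^ 2 / 2)) ≤ Real.exp (-x ^ 2 / 2) / x := by
  set f' : ℝ → ℝ := fun u => Real.exp (-u ^ 2 / 2) + Real.exp (-u ^ 2 / 2) / u ^ 2 with hf'
  have hderiv : ∀ u ∈ Set.Ici x, HasDerivAt (fun u : ℝ => -Real.exp (-u ^ 2 / 2) / u) (f' u) u := by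
    intro u hu
    have hu0 : (0:ℝ) < u := lt_of_lt_of_le hx hu
    have h := ((deriv_gauss u).fun_neg).fun_div (hasDerivAt_id' u) hu0.ne'
    have key : f' u = ((-(Real.exp (-u ^ 2 / 2) * -u)) * u - (-Real.exp (-u ^ 2 / 2)) * 1) / u ^ 2 := by
      rw [hf']
      field_simp
      ring
    rw [key]
    simpa using h
  have hint : IntegrableOn f' (Set.Ioi x) := by
    apply Integrable.mono' ((gauss_integrable.const_mul (1 + x⁻¹ ^ 2)).integrableOn)
    · apply AEStronglyMeasurable.add
      · exact gauss_integrable.aestronglyMeasurable.restrict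
      · exact ((by fun_prop : Measurable (fun u : ℝ => Real.exp (-u ^ 2 / 2) / u ^ 2)).aestronglyMeasurable).restrict
    · rw [ae_restrict_iff' measurableSet_Ioi]
      apply ae_of_all
      intro u hu
      simp only [hf']
      have hu0 : (0:ℝ) < u := lt_trans hx hu
      have h2 : Real.exp (-u ^ 2 / 2) / u ^ 2 ≤ Real.exp (-u ^ 2 / 2) * x⁻¹ ^ 2 := by
        rw [div_eq_mul_inv, ← inv_pow]
        gcongr
        all_goals first
          | positivity
          | exact le_of_lt (Set.mem_Ioi.mp hu)
      rw [Real.norm_eq_abs, abs_of_nonneg (by positivity)]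
      nlinarith [h2, Real.exp_pos (-u ^ 2 / 2)]
  have htend : Tendsto (fun u : ℝ => -Real.exp (-u ^ 2 / 2) / u) atTop (nhds 0) := by
    have := (gauss_tendsto_zero.neg).mul tendsto_inv_atTop_zero
    simpa [div_eq_mul_inv] using this
  have hFTC := integral_Ioi_of_hasDerivAt_of_tendsto' hderiv hint htend
  have hmono : (∫ u in Set.Ioi x, Real.exp (-u ^ 2 / 2)) ≤ ∫ u in Set.Ioi x, f' u := by
    apply setIntegral_mono_on gauss_integrable.integrableOn hint measurableSet_Ioi
    intro u hu
    have : (0:ℝ) ≤ Real.exp (-u ^ 2 / 2) / u ^ 2 := by positivity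
    linarith
  rw [hFTC] at hmono
  calc (∫ u in Set.Ioi x, Real.exp (-u ^ 2 / 2)) ≤ 0 - (-Real.exp (-x ^ 2 / 2) / x) := hmono
  _ = Real.exp (-x ^ 2 / 2) / x := by ring

lemma mills_lower {x : ℝ} (hx : 0 < x) :
    Real.exp (-x ^ 2 / 2) * (x / (x ^ 2 + 1)) ≤ ∫ u in Set.Ioi x, Real.exp (-u ^ 2 / 2) := by
  set f' : ℝ → ℝ := fun u =>
    Real.exp (-u ^ 2 / 2) * ((u ^ 4 + 2 * u ^ 2 - 1) / (u ^ 2 + 1) ^ 2) with hf'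
  have habs : ∀ u : ℝ, |(u ^ 4 + 2 * u ^ 2 - 1) / (u ^ 2 + 1) ^ 2| ≤ 1 := by
    intro u
    rw [abs_div, abs_of_pos (by positivity : (0:ℝ) < (u ^ 2 + 1) ^ 2), div_le_one (by positivity)]
    rw [abs_le]
    constructor <;> nlinarith [sq_nonneg u, sq_nonneg (u ^ 2)]
  have hderiv : ∀ u ∈ Set.Ici x,
      HasDerivAt (fun u : ℝ => -(Real.exp (-u ^ 2 / 2) * (u / (u ^ 2 + 1)))) (f' u) u := by
    intro u _
    have hne : (u ^ 2 + 1 : ℝ) ≠ 0 := by positivity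
    have hh : HasDerivAt (fun u : ℝ => u / (u ^ 2 + 1))
        ((1 * (u ^ 2 + 1) - u * (2 * u ^ 1)) / (u ^ 2 + 1) ^ 2) u := by
      simpa using (hasDerivAt_id' u).fun_div ((hasDerivAt_pow 2 u).add_const 1) hne
    have h := ((deriv_gauss u).mul hh).neg
    have key : f' u = -(Real.exp (-u ^ 2 / 2) * (-u) * (u / (u ^ 2 + 1)) +
        Real.exp (-u ^ 2 / 2) * ((1 * (u ^ 2 + 1) - u * (2 * u ^ 1)) / (u ^ 2 + 1) ^ 2)) := by
      rw [hf']
      field_simp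
      ring
    rw [key]
    exact h
  have hint : IntegrableOn f' (Set.Ioi x) := by
    apply Integrable.mono' gauss_integrable.integrableOn
    · exact ((by fun_prop : Measurable f').aestronglyMeasurable).restrict
    · apply ae_of_all
      intro u
      simp only [hf']
      rw [norm_mul, Real.norm_eq_abs, Real.norm_eq_abs, abs_of_pos (Real.exp_pos _)]
      nth_rewrite 2 [← mul_one (Real.exp (-u ^ 2 / 2))]
      exact mul_le_mul_of_nonneg_left (habs u) (Real.exp_pos _).le
  have htend : Tendsto (fun u : ℝ => -(Real.exp (-u ^ 2 / 2) * (u / (u ^ 2 + 1)))) atTop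
      (nhds 0) := by
    have h0 : Tendsto (fun u : ℝ => u / (u ^ 2 + 1)) atTop (nhds 0) := by
      apply squeeze_zero' (g := fun u : ℝ => u⁻¹)
      · filter_upwards [Filter.eventually_gt_atTop (0:ℝ)] with u hu
        positivity
      · filter_upwards [Filter.eventually_gt_atTop (0:ℝ)] with u hu
        rw [div_le_iff₀ (by positivity)]
        have h1 : u⁻¹ * u = 1 := inv_mul_cancel₀ hu.ne'
        have h2 : (0:ℝ) < u⁻¹ := by positivity
        nlinarith
      · exact tendsto_inv_atTop_zero
    have := (gauss_tendsto_zero.mul h0).neg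
    simpa using this
  have hFTC := integral_Ioi_of_hasDerivAt_of_tendsto' hderiv hint htend
  have hmono : (∫ u in Set.Ioi x, f' u) ≤ ∫ u in Set.Ioi x, Real.exp (-u ^ 2 / 2) := by
    apply setIntegral_mono_on hint gauss_integrable.integrableOn measurableSet_Ioi
    intro u _
    simp only [hf']
    nth_rewrite 2 [← mul_one (Real.exp (-u ^ 2 / 2))]
    exact mul_le_mul_of_nonneg_left ((abs_le.mp (habs u)).2) (Real.exp_pos _).le
  rw [hFTC] at hmono
  calc Real.exp (-x ^ 2 / 2) * (x / (x ^ 2 + 1))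
      = 0 - -(Real.exp (-x ^ 2 / 2) * (x / (x ^ 2 + 1))) := by ring
  _ ≤ _ := hmono

lemma key_upper {x a : ℝ} (hx : 1 < x) (ha : |a| ≤ 1 / (2 * x ^ 2)) :
    x ^ 2 + 1 ≤ (1 + 3 * (x⁻¹ ^ 2 + x ^ 2 * a ^ 2)) * (x * (x * (1 + a))) := by
  have hx0 : (0:ℝ) < x := by linarith
  have hx2 : (1:ℝ) < x ^ 2 := by nlinarith
  have hw : x⁻¹ ^ 2 * x ^ 2 = 1 := by field_simp
  have ha1 : -a ≤ 1 / (2 * x ^ 2) := by linarith [(abs_le.mp ha).1]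
  have ha2 : a ≤ 1 / (2 * x ^ 2) := le_of_abs_le ha
  have ha1' : -a * (2 * x ^ 2) ≤ 1 := by
    rw [← le_div_iff₀ (by positivity)]; exact ha1
  have ha2' : a * (2 * x ^ 2) ≤ 1 := by
    rw [← le_div_iff₀ (by positivity)]; exact ha2
  have haa : (1:ℝ)/2 ≤ 1 + a := by nlinarith
  have hw0 : (0:ℝ) < x⁻¹ ^ 2 := by positivity
  nlinarith [sq_nonneg (x ^ 2 * a), mul_nonneg (sq_nonneg (x ^ 2 * a)) (by linarith : (0:ℝ) ≤ 1 + a),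
    mul_pos hw0 (by positivity : (0:ℝ) < x ^ 2), sq_nonneg a, mul_nonneg hw0.le (sq_nonneg (x*a))]

lemma key_lower {x a : ℝ} (hx : 1 < x) (ha : |a| ≤ 1 / (2 * x ^ 2))
    (h : 0 ≤ 1 - 3 * (x⁻¹ ^ 2 + x ^ 2 * a ^ 2)) :
    (1 - 3 * (x⁻¹ ^ 2 + x ^ 2 * a ^ 2)) * ((x * (1 + a)) ^ 2 + 1)
      ≤ (1 - x ^ 2 * a ^ 2 / 2) * (x * (x * (1 + a))) := by
  have hx0 : (0:ℝ) < x := by linarith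
  have hx2 : (1:ℝ) < x ^ 2 := by nlinarith
  have hw : x⁻¹ ^ 2 * x ^ 2 = 1 := by field_simp
  have ha1 : -a ≤ 1 / (2 * x ^ 2) := by linarith [(abs_le.mp ha).1]
  have ha2 : a ≤ 1 / (2 * x ^ 2) := le_of_abs_le ha
  have ha1' : -a * (2 * x ^ 2) ≤ 1 := by
    rw [← le_div_iff₀ (by positivity)]; exact ha1
  have ha2' : a * (2 * x ^ 2) ≤ 1 := by
    rw [← le_div_iff₀ (by positivity)]; exact ha2
  have hw0 : (0:ℝ) < x⁻¹ ^ 2 := by positivity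
  -- from h : 3*x⁻¹^2 ≤ 1 so x^2 ≥ 3
  have hx3 : (3:ℝ) ≤ x ^ 2 := by nlinarith [mul_le_mul_of_nonneg_right h (by positivity : (0:ℝ) ≤ x^2)]
  have haa : (1:ℝ)/2 ≤ 1 + a := by nlinarith
  nlinarith [sq_nonneg (x ^ 2 * a), sq_nonneg a, mul_nonneg (sq_nonneg (x ^ 2 * a)) (by linarith : (0:ℝ) ≤ 1 + a),
    mul_nonneg hw0.le (sq_nonneg (x ^ 2 * a)), mul_nonneg (mul_nonneg hw0.le hw0.le) (sq_nonneg (x ^ 2 * a)),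
    sq_nonneg (x ^ 2 * a ^ 2), mul_pos hx0 hx0, sq_nonneg (1 + a),
    mul_le_mul_of_nonneg_right ha2' (sq_nonneg a), mul_le_mul_of_nonneg_right ha1' (sq_nonneg a)]

lemma sqrt2pi_pos : 0 < Real.sqrt (2 * Real.pi) :=
  Real.sqrt_pos.mpr (by positivity)

lemma tail_repr (x : ℝ) :
    1 - stdNormalCDF x = (Real.sqrt (2 * Real.pi))⁻¹ * ∫ u in Set.Ioi x, Real.exp (-u ^ 2 / 2) := by
  have hsplit : (∫ u in Set.Iic x, Real.exp (-u ^ 2 / 2)) +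
      (∫ u in Set.Ioi x, Real.exp (-u ^ 2 / 2)) = Real.sqrt (2 * Real.pi) := by
    rw [intervalIntegral.integral_Iic_add_Ioi gauss_integrable.integrableOn gauss_integrable.integrableOn]
    exact gauss_total
  have hcdf : stdNormalCDF x =
      (Real.sqrt (2 * Real.pi))⁻¹ * ∫ u in Set.Iic x, Real.exp (-u ^ 2 / 2) := by
    rw [stdNormalCDF]
    simp only [stdNormalPDF]
    exact integral_const_mul _ _
  have hone : (Real.sqrt (2 * Real.pi))⁻¹ * Real.sqrt (2 * Real.pi) = 1 :=
    inv_mul_cancel₀ sqrt2pi_pos.ne'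
  rw [hcdf, ← hone, ← hsplit]
  ring

end Aux

/-- Gaussian tail under a small relative perturbation of the argument: there is an absolute
constant `C` such that for all `x > 1` and `|a| ≤ 1/(2x²)`,
`|(1-Φ(x(1+a)))/((1-Φ(x))·e^{-x²a}) - 1| ≤ C(x⁻² + x²a²)`. -/
theorem gaussian_tail_perturbation :
    ∃ C : ℝ, 0 < C ∧ ∀ x a : ℝ, 1 < x → |a| ≤ 1 / (2 * x ^ 2) →
      |(1 - stdNormalCDF (x * (1 + a))) / ((1 - stdNormalCDF x) * Real.exp (-x ^ 2 * a)) - 1|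
        ≤ C * (x⁻¹ ^ 2 + x ^ 2 * a ^ 2) := by
  refine ⟨3, by norm_num, ?_⟩
  intro x a hx ha
  have hx0 : (0:ℝ) < x := by linarith
  have hx2 : (1:ℝ) < x ^ 2 := by nlinarith
  have ha1 : -(1 / (2 * x ^ 2)) ≤ a := (abs_le.mp ha).1
  have ha2 : a ≤ 1 / (2 * x ^ 2) := (abs_le.mp ha).2
  have hhalf : 1 / (2 * x ^ 2) ≤ 1 / 2 := by
    apply div_le_div_of_nonneg_left (by norm_num) (by norm_num) (by nlinarith)
  have haa : (1:ℝ)/2 ≤ 1 + a := by linarith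
  set y : ℝ := x * (1 + a) with hy
  have hy0 : (0:ℝ) < y := by rw [hy]; nlinarith
  set qx : ℝ := ∫ u in Set.Ioi x, Real.exp (-u ^ 2 / 2) with hqx
  set qy : ℝ := ∫ u in Set.Ioi y, Real.exp (-u ^ 2 / 2) with hqy
  have hqxu : qx ≤ Real.exp (-x ^ 2 / 2) / x := mills_upper hx0
  have hqxl : Real.exp (-x ^ 2 / 2) * (x / (x ^ 2 + 1)) ≤ qx := mills_lower hx0
  have hqyu : qy ≤ Real.exp (-y ^ 2 / 2) / y := mills_upper hy0
  have hqyl : Real.exp (-y ^ 2 / 2) * (y / (y ^ 2 + 1)) ≤ qy := mills_lower hy0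
  have hqx0 : 0 < qx := lt_of_lt_of_le (by positivity) hqxl
  have hqy0 : 0 < qy := lt_of_lt_of_le (by positivity) hqyl
  -- the exponential splitting
  have hEy : Real.exp (-y ^ 2 / 2)
      = Real.exp (-x ^ 2 / 2) * Real.exp (-(x ^ 2 * a)) * Real.exp (-(x ^ 2 * a ^ 2) / 2) := by
    rw [← Real.exp_add, ← Real.exp_add]
    congr 1
    rw [hy]; ring
  have hE1 : Real.exp (-(x ^ 2 * a ^ 2) / 2) ≤ 1 := by
    rw [← Real.exp_zero]
    apply Real.exp_le_exp.mpr
    nlinarith [sq_nonneg (x * a)]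
  have hE2 : 1 - x ^ 2 * a ^ 2 / 2 ≤ Real.exp (-(x ^ 2 * a ^ 2) / 2) := by
    have := Real.add_one_le_exp (-(x ^ 2 * a ^ 2) / 2)
    linarith
  -- rewrite the goal
  rw [tail_repr, tail_repr, ← hqx, ← hqy]
  have hc0 : (0:ℝ) < (Real.sqrt (2 * Real.pi))⁻¹ := by
    exact inv_pos.mpr sqrt2pi_pos
  have hexp0 : (0:ℝ) < Real.exp (-x ^ 2 * a) := Real.exp_pos _
  have hratio : (Real.sqrt (2 * Real.pi))⁻¹ * qy /
      ((Real.sqrt (2 * Real.pi))⁻¹ * qx * Real.exp (-x ^ 2 * a))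
      = qy * Real.exp (x ^ 2 * a) / qx := by
    rw [show (-x ^ 2 * a : ℝ) = -(x ^ 2 * a) by ring, Real.exp_neg]
    field_simp
  rw [hratio, abs_le]
  set s : ℝ := x⁻¹ ^ 2 + x ^ 2 * a ^ 2 with hs
  have hEt : Real.exp (-(x ^ 2 * a)) * Real.exp (x ^ 2 * a) = 1 := by
    rw [← Real.exp_add]; simp
  have hs0 : 0 < s := by positivity
  constructor
  · -- lower bound : 1 - 3s ≤ qy e^t / qx
    have hmain : 1 - 3 * s ≤ qy * Real.exp (x ^ 2 * a) / qx := by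
      rcases le_or_gt (1 - 3 * s) 0 with h0 | h0
      · exact le_trans h0 (by positivity)
      · rw [le_div_iff₀ hqx0]
        have hk := key_lower hx ha (by rw [← hs]; linarith)
        rw [← hy] at hk
        have hsub : (1 - 3 * s) / x ≤ (1 - x ^ 2 * a ^ 2 / 2) * (y / (y ^ 2 + 1)) := by
          rw [show (1 - x ^ 2 * a ^ 2 / 2) * (y / (y ^ 2 + 1))
              = ((1 - x ^ 2 * a ^ 2 / 2) * y) / (y ^ 2 + 1) by ring,
            div_le_div_iff₀ hx0 (by positivity)]
          nlinarith [hk]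

        calc (1 - 3 * s) * qx ≤ (1 - 3 * s) * (Real.exp (-x ^ 2 / 2) / x) :=
              mul_le_mul_of_nonneg_left hqxu h0.le
          _ = Real.exp (-x ^ 2 / 2) * ((1 - 3 * s) / x) := by ring
          _ ≤ Real.exp (-x ^ 2 / 2) * ((1 - x ^ 2 * a ^ 2 / 2) * (y / (y ^ 2 + 1))) :=
              mul_le_mul_of_nonneg_left hsub (Real.exp_pos _).le
          _ ≤ Real.exp (-x ^ 2 / 2) * (Real.exp (-(x ^ 2 * a ^ 2) / 2) * (y / (y ^ 2 + 1))) :=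
              mul_le_mul_of_nonneg_left
                (mul_le_mul_of_nonneg_right hE2 (by positivity)) (Real.exp_pos _).le
          _ = (Real.exp (-y ^ 2 / 2) * (y / (y ^ 2 + 1))) * Real.exp (x ^ 2 * a) := by
              rw [hEy, Real.exp_neg (x ^ 2 * a)]
              field_simp
          _ ≤ qy * Real.exp (x ^ 2 * a) := mul_le_mul_of_nonneg_right hqyl (Real.exp_pos _).le
    linarith
  · -- upper bound
    rw [sub_le_iff_le_add, div_le_iff₀ hqx0]
    have hk := key_upper hx ha
    rw [← hy] at hk
    have hsub : Real.exp (-x ^ 2 / 2) / y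
        ≤ (1 + 3 * s) * (Real.exp (-x ^ 2 / 2) * (x / (x ^ 2 + 1))) := by
      rw [show (1 + 3 * s) * (Real.exp (-x ^ 2 / 2) * (x / (x ^ 2 + 1)))
          = ((1 + 3 * s) * (Real.exp (-x ^ 2 / 2) * x)) / (x ^ 2 + 1) by ring,
        div_le_div_iff₀ hy0 (by positivity)]
      have h5 := mul_le_mul_of_nonneg_right hk (Real.exp_pos (-x ^ 2 / 2)).le
      linarith [h5]
    calc qy * Real.exp (x ^ 2 * a)
        ≤ (Real.exp (-y ^ 2 / 2) / y) * Real.exp (x ^ 2 * a) :=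
          mul_le_mul_of_nonneg_right hqyu (Real.exp_pos _).le
      _ = Real.exp (-x ^ 2 / 2) * Real.exp (-(x ^ 2 * a ^ 2) / 2) / y := by
          rw [hEy, Real.exp_neg (x ^ 2 * a)]
          field_simp
      _ ≤ Real.exp (-x ^ 2 / 2) * 1 / y := by gcongr
      _ = Real.exp (-x ^ 2 / 2) / y := by ring
      _ ≤ (1 + 3 * s) * (Real.exp (-x ^ 2 / 2) * (x / (x ^ 2 + 1))) := hsub
      _ ≤ (1 + 3 * s) * qx := mul_le_mul_of_nonneg_left hqxl (by positivity)
      _ = (3 * s + 1) * qx := by ring
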